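/- Let u_θ be an MLP with scalar input and output in which all hidden layers have the same width d (d₁ = ⋯ = d_L = d), with all biases equal to zero, and suppose the entries of the weight matrices W⁽¹⁾,…,W⁽ᴸ⁺¹⁾ are jointly independent square-integrable real random variables on a probability space, each with mean zero. Assume σ : ℝ → ℝ is differentiable with measurable derivative satisfying |σ'(t)| ≤ 1 for all t ∈ ℝ. Then for every fixed x ∈ ℝ, the random variable ω ↦ ∂u_θ/∂x (x) is integrable and has expectation zero: 𝔼[∂u_θ/∂x (x)] = 0. -/

import Mathlib

open Matrix MeasureTheory ProbabilityTheory

/-- The pre-activation values `u⁽ˡ⁺¹⁾(x)` of an MLP with scalar input,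
dimensions `d`, weights `W`, biases `b` and activation `σ`:
`u⁽¹⁾(x) = W⁽¹⁾ x + b⁽¹⁾` and `u⁽ˡ⁺¹⁾(x) = W⁽ˡ⁺¹⁾ σ(u⁽ˡ⁾(x)) + b⁽ˡ⁺¹⁾`.
Here `mlpPre d W b σ l` is `u⁽ˡ⁺¹⁾`, so `W l` is the weight matrix `W⁽ˡ⁺¹⁾`. -/
noncomputable def mlpPre (d : ℕ → ℕ)
    (W : (l : ℕ) → Matrix (Fin (d (l + 1))) (Fin (d l)) ℝ)
    (b : (l : ℕ) → Fin (d (l + 1)) → ℝ) (σ : ℝ → ℝ) :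
    (l : ℕ) → ℝ → Fin (d (l + 1)) → ℝ
  | 0, x => W 0 *ᵥ (fun _ => x) + b 0
  | l + 1, x => W (l + 1) *ᵥ (fun i => σ (mlpPre d W b σ l x i)) + b (l + 1)

/-- The derivative of `mlpPre` with respect to the input, at zero bias. -/
noncomputable def mlpD (d : ℕ → ℕ)
    (W : (l : ℕ) → Matrix (Fin (d (l + 1))) (Fin (d l)) ℝ) (σ : ℝ → ℝ) (x : ℝ) :
    (l : ℕ) → Fin (d (l + 1)) → ℝ
  | 0 => fun i => ∑ j, W 0 i j
  | l + 1 => fun i => ∑ j, W (l + 1) i j *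
      (deriv σ (mlpPre d W (fun _ => 0) σ l x j) * mlpD d W σ x l j)

lemma mlpPre_zero_apply (d : ℕ → ℕ) (W : (l : ℕ) → Matrix (Fin (d (l + 1))) (Fin (d l)) ℝ)
    (σ : ℝ → ℝ) (t : ℝ) (i : Fin (d 1)) :
    mlpPre d W (fun _ => 0) σ 0 t i = ∑ j, W 0 i j * t := by
  simp [mlpPre, mulVec, dotProduct]

lemma mlpPre_succ_apply (d : ℕ → ℕ) (W : (l : ℕ) → Matrix (Fin (d (l + 1))) (Fin (d l)) ℝ)
    (σ : ℝ → ℝ) (l : ℕ) (t : ℝ) (i : Fin (d (l + 2))) :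
    mlpPre d W (fun _ => 0) σ (l + 1) t i
      = ∑ j, W (l + 1) i j * σ (mlpPre d W (fun _ => 0) σ l t j) := by
  simp [mlpPre, mulVec, dotProduct]

lemma mlp_hasDerivAt (d : ℕ → ℕ) (σ : ℝ → ℝ) (hσ : Differentiable ℝ σ) (x : ℝ)
    (W : (l : ℕ) → Matrix (Fin (d (l + 1))) (Fin (d l)) ℝ) :
    ∀ l (i : Fin (d (l + 1))),
      HasDerivAt (fun t => mlpPre d W (fun _ => 0) σ l t i) (mlpD d W σ x l i) x := by
  intro l
  induction l with
  | zero =>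
    intro i
    have h : (fun t => mlpPre d W (fun _ => 0) σ 0 t i) = fun t => ∑ j, W 0 i j * t := by
      funext t; exact mlpPre_zero_apply d W σ t i
    rw [h]
    simpa [mlpD] using HasDerivAt.fun_sum (fun j _ => (hasDerivAt_id x).const_mul (W 0 i j))
  | succ l ih =>
    intro i
    have h : (fun t => mlpPre d W (fun _ => 0) σ (l + 1) t i)
        = fun t => ∑ j, W (l + 1) i j * σ (mlpPre d W (fun _ => 0) σ l t j) := by
      funext t; exact mlpPre_succ_apply d W σ l t i
    rw [h]
    have : HasDerivAt (fun t => ∑ j, W (l + 1) i j * σ (mlpPre d W (fun _ => 0) σ l t j))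
        (∑ j, W (l + 1) i j * (deriv σ (mlpPre d W (fun _ => 0) σ l x j) * mlpD d W σ x l j))
        x := by
      refine HasDerivAt.fun_sum (fun j _ => ?_)
      exact (((hσ _).hasDerivAt.comp x (ih j)).const_mul (W (l + 1) i j))
    simpa [mlpD] using this

lemma mlpPre_congr (d : ℕ → ℕ) (σ : ℝ → ℝ) (b : (l : ℕ) → Fin (d (l + 1)) → ℝ)
    (W W' : (l : ℕ) → Matrix (Fin (d (l + 1))) (Fin (d l)) ℝ) :
    ∀ l, (∀ l' ≤ l, W l' = W' l') → ∀ t, mlpPre d W b σ l t = mlpPre d W' b σ l t := by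
  intro l
  induction l with
  | zero => intro h t; simp [mlpPre, h 0 le_rfl]
  | succ l ih =>
    intro h t
    simp [mlpPre, h (l + 1) le_rfl, ih (fun l' hl' => h l' (hl'.trans (Nat.le_succ l))) t]

lemma mlpD_congr (d : ℕ → ℕ) (σ : ℝ → ℝ) (x : ℝ)
    (W W' : (l : ℕ) → Matrix (Fin (d (l + 1))) (Fin (d l)) ℝ) :
    ∀ l, (∀ l' ≤ l, W l' = W' l') → mlpD d W σ x l = mlpD d W' σ x l := by
  intro l
  induction l with
  | zero => intro h; funext i; simp [mlpD, h 0 le_rfl]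
  | succ l ih =>
    intro h
    have h' : ∀ l' ≤ l, W l' = W' l' := fun l' hl' => h l' (hl'.trans (Nat.le_succ l))
    funext i
    simp [mlpD, h (l + 1) le_rfl, ih h', mlpPre_congr d σ _ W W' l h' x]

lemma mlp_measurable {α : Type*} [MeasurableSpace α] (d : ℕ → ℕ) (σ : ℝ → ℝ)
    (hσc : Continuous σ) (hσ' : Measurable (deriv σ)) (x : ℝ)
    (V : (l : ℕ) → α → Matrix (Fin (d (l + 1))) (Fin (d l)) ℝ)
    (hV : ∀ l i j, Measurable fun a => V l a i j) :
    ∀ l, (∀ i, Measurable fun a => mlpPre d (fun l' => V l' a) (fun _ => 0) σ l x i) ∧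
         (∀ i, Measurable fun a => mlpD d (fun l' => V l' a) σ x l i) := by
  intro l
  induction l with
  | zero =>
    constructor
    · intro i
      simp only [mlpPre_zero_apply]
      exact Finset.measurable_sum _ fun j _ => (hV 0 i j).mul_const x
    · intro i
      simp only [mlpD]
      exact Finset.measurable_sum _ fun j _ => hV 0 i j
  | succ l ih =>
    constructor
    · intro i
      simp only [mlpPre_succ_apply]
      exact Finset.measurable_sum _ fun j _ =>
        (hV (l + 1) i j).mul (hσc.measurable.comp (ih.1 j))
    · intro i
      simp only [mlpD]
      exact Finset.measurable_sum _ fun j _ =>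
        (hV (l + 1) i j).mul ((hσ'.comp (ih.1 j)).mul (ih.2 j))
/-- For a randomly initialized MLP with scalar input and output,
hidden widths all equal to `m`, zero biases, jointly independent mean-zero
square-integrable weight entries, and a differentiable activation `σ` with measurable
derivative bounded by `1`, the random variable `ω ↦ ∂u_θ/∂x (x)` is integrable and has
expectation zero. -/
theorem expectation_mlp_deriv_eq_zero
    {Ω : Type*} [MeasurableSpace Ω] (μ : Measure Ω) [IsProbabilityMeasure μ]
    (L m : ℕ) (hL : 1 ≤ L) (hm : 1 ≤ m)
    (d : ℕ → ℕ) (h0 : d 0 = 1) (hdL : d (L + 1) = 1)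
    (hdm : ∀ l, 1 ≤ l → l ≤ L → d l = m)
    (W : (l : ℕ) → Ω → Matrix (Fin (d (l + 1))) (Fin (d l)) ℝ)
    (hWmeas : ∀ l i j, Measurable fun ω => W l ω i j)
    (hWL2 : ∀ l i j, MemLp (fun ω => W l ω i j) 2 μ)
    (hWindep : iIndepFun
      (fun p : (l : Fin (L + 1)) × (Fin (d (l.1 + 1)) × Fin (d l.1)) =>
        fun ω => W p.1 ω p.2.1 p.2.2) μ)
    (hWmean : ∀ l, l ≤ L → ∀ i j, ∫ ω, W l ω i j ∂μ = 0)
    (σ : ℝ → ℝ) (hσ : Differentiable ℝ σ)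
    (hσ' : Measurable (deriv σ)) (hσbound : ∀ t, |deriv σ t| ≤ 1)
    (x : ℝ) (i : Fin (d (L + 1))) :
    Integrable (fun ω =>
      deriv (fun t => mlpPre d (fun l => W l ω) (fun _ => 0) σ L t i) x) μ ∧
    ∫ ω, deriv (fun t => mlpPre d (fun l => W l ω) (fun _ => 0) σ L t i) x ∂μ = 0 := by
  classical
  have hderiv : ∀ ω, deriv (fun t => mlpPre d (fun l => W l ω) (fun _ => 0) σ L t i) x
      = mlpD d (fun l => W l ω) σ x L i := fun ω =>
    (mlp_hasDerivAt d σ hσ x (fun l => W l ω) L i).deriv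
  have hmeas := mlp_measurable d σ hσ.continuous hσ' x (fun l ω => W l ω) hWmeas
  -- The key independence fact.
  have hindep : ∀ (l : ℕ), l + 1 ≤ L → ∀ (i' : Fin (d (l + 2))) (j : Fin (d (l + 1))),
      IndepFun (fun ω => W (l + 1) ω i' j)
        (fun ω => deriv σ (mlpPre d (fun l' => W l' ω) (fun _ => 0) σ l x j)
          * mlpD d (fun l' => W l' ω) σ x l j) μ := by
    intro l hl i' j
    set ι := (l' : Fin (L + 1)) × (Fin (d (l'.1 + 1)) × Fin (d l'.1)) with hι
    have hl1 : l + 1 < L + 1 := by omega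
    set ps : ι := ⟨⟨l + 1, hl1⟩, (i', j)⟩ with hps
    set S : Finset ι := {ps} with hS
    set T : Finset ι := Finset.univ.filter (fun p => p.1.1 ≤ l) with hT
    have hST : Disjoint S T := by
      rw [Finset.disjoint_left]
      intro p hpS hpT
      rw [hS, Finset.mem_singleton] at hpS
      rw [hT, Finset.mem_filter] at hpT
      subst hpS
      simp only [hps, Finset.mem_filter] at hpT
      omega
    have hIF := hWindep.indepFun_finset S T hST (fun p => hWmeas p.1 p.2.1 p.2.2)
    have hpsS : ps ∈ S := Finset.mem_singleton_self ps
    set φL : ({p // p ∈ S} → ℝ) → ℝ := fun v => v ⟨ps, hpsS⟩ with hφL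
    set recon : ({p // p ∈ T} → ℝ) → (l' : ℕ) → Matrix (Fin (d (l' + 1))) (Fin (d l')) ℝ :=
      fun v l' =>
        if h : l' ≤ l then
          Matrix.of (fun i0 j0 =>
            v ⟨⟨⟨l', by omega⟩, (i0, j0)⟩, by
              rw [hT, Finset.mem_filter]; exact ⟨Finset.mem_univ _, h⟩⟩)
        else 0 with hrecon
    set φR : ({p // p ∈ T} → ℝ) → ℝ := fun v =>
      deriv σ (mlpPre d (recon v) (fun _ => 0) σ l x j) * mlpD d (recon v) σ x l j with hφR
    have hVmeas : ∀ l' i0 j0, Measurable fun v : ({p // p ∈ T} → ℝ) => recon v l' i0 j0 := by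
      intro l' i0 j0
      by_cases h : l' ≤ l
      · simpa [hrecon, h] using measurable_pi_apply _
      · simp [hrecon, h, measurable_const]
    have hmm := mlp_measurable d σ hσ.continuous hσ' x (fun l' v => recon v l') hVmeas l
    have hφLmeas : Measurable φL := measurable_pi_apply _
    have hφRmeas : Measurable φR := (hσ'.comp (hmm.1 j)).mul (hmm.2 j)
    have hcomp := hIF.comp hφLmeas hφRmeas
    have hLeq : (φL ∘ fun ω (p : {p // p ∈ S}) =>
        W p.1.1.1 ω p.1.2.1 p.1.2.2) = fun ω => W (l + 1) ω i' j := rfl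
    have hReq : (φR ∘ fun ω (p : {p // p ∈ T}) => W p.1.1.1 ω p.1.2.1 p.1.2.2)
        = fun ω => deriv σ (mlpPre d (fun l' => W l' ω) (fun _ => 0) σ l x j)
          * mlpD d (fun l' => W l' ω) σ x l j := by
      funext ω
      have hcg : ∀ l' ≤ l, recon (fun p : {p // p ∈ T} => W p.1.1.1 ω p.1.2.1 p.1.2.2) l'
          = W l' ω := by
        intro l' h
        funext i0 j0
        simp [hrecon, h]
      simp only [Function.comp_apply, hφR]
      rw [mlpPre_congr d σ _ _ (fun l' => W l' ω) l hcg x,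
        mlpD_congr d σ x _ (fun l' => W l' ω) l hcg]
    rw [hLeq, hReq] at hcomp
    exact hcomp
  -- Main induction: integrability and zero mean of the derivative at every layer.
  have key : ∀ l, l ≤ L → ∀ (k : Fin (d (l + 1))),
      Integrable (fun ω => mlpD d (fun l' => W l' ω) σ x l k) μ ∧
      ∫ ω, mlpD d (fun l' => W l' ω) σ x l k ∂μ = 0 := by
    intro l
    induction l with
    | zero =>
      intro _ k
      have hint : ∀ j, Integrable (fun ω => W 0 ω k j) μ := fun j =>
        (hWL2 0 k j).integrable one_le_two
      constructor
      · simpa [mlpD] using integrable_finset_sum Finset.univ (fun j _ => hint j)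
      · simp only [mlpD]
        rw [integral_finset_sum _ (fun j _ => hint j)]
        simp [hWmean 0 (Nat.zero_le L)]
    | succ l ih =>
      intro hl k
      have hl' : l ≤ L := by omega
      have hFmeas : ∀ j : Fin (d (l + 1)), Measurable (fun ω =>
          deriv σ (mlpPre d (fun l' => W l' ω) (fun _ => 0) σ l x j)
            * mlpD d (fun l' => W l' ω) σ x l j) := fun j =>
        (hσ'.comp ((hmeas l).1 j)).mul ((hmeas l).2 j)
      have hFint : ∀ j : Fin (d (l + 1)), Integrable (fun ω =>
          deriv σ (mlpPre d (fun l' => W l' ω) (fun _ => 0) σ l x j)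
            * mlpD d (fun l' => W l' ω) σ x l j) μ := by
        intro j
        refine Integrable.mono' ((ih hl' j).1.abs) (hFmeas j).aestronglyMeasurable ?_
        filter_upwards with ω
        rw [Real.norm_eq_abs, abs_mul]
        exact mul_le_of_le_one_left (abs_nonneg _) (hσbound _)
      have hterm : ∀ j : Fin (d (l + 1)), Integrable (fun ω => W (l + 1) ω k j *
          (deriv σ (mlpPre d (fun l' => W l' ω) (fun _ => 0) σ l x j)
            * mlpD d (fun l' => W l' ω) σ x l j)) μ := fun j =>
        (hindep l hl k j).integrable_mul ((hWL2 (l + 1) k j).integrable one_le_two) (hFint j)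
      constructor
      · simpa [mlpD] using integrable_finset_sum Finset.univ (fun j _ => hterm j)
      · simp only [mlpD]
        rw [integral_finset_sum _ (fun j _ => hterm j)]
        refine Finset.sum_eq_zero fun j _ => ?_
        have hml := (hindep l hl k j).integral_mul_eq_mul_integral
          ((hWL2 (l + 1) k j).integrable one_le_two).aestronglyMeasurable (hFint j).aestronglyMeasurable
        rw [show (fun ω => W (l + 1) ω k j *
            (deriv σ (mlpPre d (fun l' => W l' ω) (fun _ => 0) σ l x j)
              * mlpD d (fun l' => W l' ω) σ x l j)) = ((fun ω => W (l + 1) ω k j) *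
            fun ω => deriv σ (mlpPre d (fun l' => W l' ω) (fun _ => 0) σ l x j)
              * mlpD d (fun l' => W l' ω) σ x l j) from rfl, hml,
          hWmean (l + 1) hl k j, zero_mul]
  have heq : (fun ω => deriv (fun t => mlpPre d (fun l => W l ω) (fun _ => 0) σ L t i) x)
      = fun ω => mlpD d (fun l => W l ω) σ x L i := funext hderiv
  rw [heq]
  exact key L le_rfl i
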